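/- Lower bound for the directed chromatic index: Let G be a loopless digraph on a finite vertex set V. If the edges (2-walks) of G can be colored by a set S of n elements so that for every 3-walk (v_1, v_2, v_3) the colors of the edges (v_1, v_2) and (v_2, v_3) differ, then the chromatic number of the undirected version of G is at most 2^n. -/

import Mathlib

/-- A `k`-walk in the digraph `G` is a function `w : Fin k → V` such that
consecutive vertices are joined by an edge of `G`. -/
def IsWalk {V : Type*} (G : V → V → Prop) {k : ℕ} (w : Fin k → V) : Prop :=
  ∀ i : ℕ, ∀ h : i + 1 < k, G (w ⟨i, Nat.lt_of_succ_lt h⟩) (w ⟨i + 1, h⟩)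

theorem IsWalk.walkPrefix {V : Type*} {G : V → V → Prop} {k : ℕ} {u : Fin (k + 1) → V}
    (hu : IsWalk G u) : IsWalk G (fun i : Fin k => u i.castSucc) := by
  intro i h
  exact hu i (by omega)

theorem IsWalk.walkSuffix {V : Type*} {G : V → V → Prop} {k : ℕ} {u : Fin (k + 1) → V}
    (hu : IsWalk G u) : IsWalk G (fun i : Fin k => u i.succ) := by
  intro i h
  exact hu (i + 1) (by omega)

/-- The `k`-walks of `G`, as a subtype. -/
def Walks {V : Type*} (G : V → V → Prop) (k : ℕ) : Type _ :=
  {w : Fin k → V // IsWalk G w}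

/-- A `P`-coloring of the `k`-walks of `G`: for every `(k+1)`-walk `u`,
the color of its prefix `k`-walk is not `≤` the color of its suffix `k`-walk. -/
def IsPColoring {V : Type*} {P : Type*} [Preorder P] (G : V → V → Prop) (k : ℕ)
    (c : Walks G k → P) : Prop :=
  ∀ u : Walks G (k + 1),
    ¬ c ⟨fun i => u.1 i.castSucc, u.2.walkPrefix⟩ ≤ c ⟨fun i => u.1 i.succ, u.2.walkSuffix⟩

/-- The undirected version of a digraph `G`: `u` and `v` are adjacent iff `u ≠ v` and at
least one of the directed edges `u → v`, `v → u` is present. -/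
def undirected {V : Type*} (G : V → V → Prop) : SimpleGraph V where
  Adj u v := u ≠ v ∧ (G u v ∨ G v u)
  symm := ⟨fun _ _ h => ⟨h.1.symm, h.2.symm⟩⟩
  loopless := ⟨fun _ h => h.1 rfl⟩

/-- **Lower bound for the directed chromatic index.** If the edges (2-walks) of a
loopless digraph `G` on a finite vertex set can be colored by a set `S` of `n` elements
so that for every 3-walk `(v₁, v₂, v₃)` the colors of the edges `(v₁, v₂)` and `(v₂, v₃)`
differ, then the chromatic number of the undirected version of `G` is at most `2 ^ n`. -/
theorem directed_chromatic_index_lower_bound {V : Type*} [Fintype V]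
    (G : V → V → Prop) (hG : ∀ v, ¬ G v v)
    (S : Type*) [Fintype S] (n : ℕ) (hS : Fintype.card S = n)
    (h : ∃ d : {e : V × V // G e.1 e.2} → S,
      ∀ w : Fin 3 → V, ∀ hw : IsWalk G w,
        d ⟨(w ⟨0, by omega⟩, w ⟨1, by omega⟩), hw 0 (by omega)⟩ ≠
        d ⟨(w ⟨1, by omega⟩, w ⟨2, by omega⟩), hw 1 (by omega)⟩) :
    (undirected G).chromaticNumber ≤ ((2 ^ n : ℕ) : ℕ∞) := by

  classical
  obtain ⟨d, hd⟩ := h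
  -- color each vertex by its set of outgoing edge colors
  set c : V → Finset S := fun v =>
    Finset.univ.filter (fun s => ∃ u : V, ∃ hvu : G v u, d ⟨(v, u), hvu⟩ = s) with hc
  have key : ∀ u v, G u v → c u ≠ c v := by
    intro u v huv hEq
    have hmem : d ⟨(u, v), huv⟩ ∈ c u := by
      simp only [hc, Finset.mem_filter, Finset.mem_univ, true_and]
      exact ⟨v, huv, rfl⟩
    rw [hEq] at hmem
    simp only [hc, Finset.mem_filter, Finset.mem_univ, true_and] at hmem
    obtain ⟨x, hvx, hdx⟩ := hmem
    have hw : IsWalk G ![u, v, x] := by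
      intro i hi
      match i, hi with
      | 0, _ => exact huv
      | 1, _ => exact hvx
    exact hd ![u, v, x] hw hdx.symm
  have col : (undirected G).Coloring (Finset S) := by
    refine SimpleGraph.Coloring.mk c ?_
    intro a b hab
    rcases hab.2 with hab' | hab'
    · exact key a b hab'
    · exact fun e => key b a hab' e.symm
  have := SimpleGraph.Coloring.colorable col
  calc (undirected G).chromaticNumber ≤ (Fintype.card (Finset S) : ℕ∞) :=
        this.chromaticNumber_le
    _ = ((2 ^ n : ℕ) : ℕ∞) := by rw [Fintype.card_finset, hS]
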